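/- Let P ≅ C_{2^s} × C₂ × C₂ with s ≥ 1. Then 3 divides |Aut(P)| but 9 does not divide |Aut(P)|. -/

import Mathlib

instance addAutGroupOld (A : Type*) [Add A] : Group (AddAut A) where
  mul g h := AddEquiv.trans h g
  one := AddEquiv.refl _
  inv := AddEquiv.symm
  mul_assoc _ _ _ := rfl
  one_mul _ := rfl
  mul_one _ := rfl
  inv_mul_cancel := AddEquiv.self_trans_symm

@[simp]
theorem addAutOld_one_apply {A : Type*} [Add A] (m : A) : (1 : AddAut A) m = m :=
  rfl

@[simp]
theorem addAutOld_mul_apply {A : Type*} [Add A] (e₁ e₂ : AddAut A) (m : A) :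
    (e₁ * e₂) m = e₁ (e₂ m) :=
  rfl

section aux
variable (s : ℕ)

abbrev AA (s : ℕ) := ZMod (2^s) × ZMod 2 × ZMod 2
abbrev BB := ZMod 2 × ZMod 2 × ZMod 2

def piAB (h2 : (2:ℕ) ∣ 2^s) : AA s →+ BB :=
  AddMonoidHom.prodMap (ZMod.castHom h2 (ZMod 2)).toAddMonoidHom (AddMonoidHom.id _)

def liftBA : BB → AA s := fun b => ((b.1.val : ZMod (2^s)), b.2)

lemma h2dvd (hs : 1 ≤ s) : (2:ℕ) ∣ 2^s := dvd_pow_self 2 (by omega)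

variable (hs : 1 ≤ s)

lemma pi_lift (b : BB) : piAB s (h2dvd s hs) (liftBA s b) = b := by
  haveI : NeZero (2^s) := ⟨pow_ne_zero _ two_ne_zero⟩
  obtain ⟨x, y, z⟩ := b
  have : ((ZMod.castHom (h2dvd s hs) (ZMod 2)) ((x.val : ZMod (2^s)))) = x := by
    rw [map_natCast, ZMod.natCast_zmod_val]
  simp [piAB, liftBA, this]

lemma two_nsmul_B (b : BB) : 2 • b = 0 := by
  obtain ⟨x, y, z⟩ := b
  have : ∀ w : ZMod 2, 2 • w = 0 := by decide
  simp [Prod.ext_iff, this]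

lemma ker_pi (a : AA s) (ha : piAB s (h2dvd s hs) a = 0) : ∃ c : AA s, a = 2 • c := by
  haveI : NeZero (2^s) := ⟨pow_ne_zero _ two_ne_zero⟩
  obtain ⟨x, y, z⟩ := a
  have h1 : (ZMod.castHom (h2dvd s hs) (ZMod 2)) x = 0 := congrArg Prod.fst ha
  have h2 : y = 0 := congrArg (fun p => p.2.1) ha
  have h3 : z = 0 := congrArg (fun p => p.2.2) ha
  rw [ZMod.castHom_apply, ZMod.cast_eq_val, ZMod.natCast_eq_zero_iff] at h1
  obtain ⟨k, hk⟩ := h1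
  refine ⟨((k : ZMod (2^s)), 0, 0), ?_⟩
  have hx : x = 2 • (k : ZMod (2^s)) := by
    rw [← ZMod.natCast_zmod_val x, hk]
    push_cast
    rw [nsmul_eq_mul]
    norm_num
  rw [h2, h3, hx]
  simp [Prod.ext_iff]
end aux

section psi
variable (s : ℕ) (hs : 1 ≤ s)

lemma pi_two_smul (a : AA s) : piAB s (h2dvd s hs) (2 • a) = 0 := by
  rw [map_nsmul, two_nsmul_B]

lemma key (f : AddMonoid.End (AA s)) (a : AA s) :
    piAB s (h2dvd s hs) (f (liftBA s (piAB s (h2dvd s hs) a))) = piAB s (h2dvd s hs) (f a) := by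
  set π := piAB s (h2dvd s hs)
  have h0 : π (liftBA s (π a) - a) = 0 := by
    rw [map_sub, pi_lift s hs, sub_self]
  obtain ⟨c, hc⟩ := ker_pi s hs _ h0
  have : liftBA s (π a) = a + 2 • c := by rw [← hc]; abel
  rw [this, map_add, map_nsmul, map_add, pi_two_smul s hs, add_zero]

def PsiFun (f : AddMonoid.End (AA s)) : AddMonoid.End BB :=
  AddMonoidHom.mk' (fun b => piAB s (h2dvd s hs) (f (liftBA s b))) (by
    intro b b'
    set π := piAB s (h2dvd s hs)
    have h0 : π (liftBA s (b + b') - liftBA s b - liftBA s b') = 0 := by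
      simp [π, map_sub, pi_lift s hs]
    obtain ⟨c, hc⟩ := ker_pi s hs _ h0
    have : liftBA s (b + b') = liftBA s b + liftBA s b' + 2 • c := by rw [← hc]; abel
    show π (f (liftBA s (b+b'))) = π (f (liftBA s b)) + π (f (liftBA s b'))
    rw [this]
    simp only [map_add, map_nsmul]
    rw [two_nsmul_B, add_zero])

def Psi : AddMonoid.End (AA s) →* AddMonoid.End BB where
  toFun := PsiFun s hs
  map_one' := AddMonoidHom.ext fun b => pi_lift s hs b
  map_mul' := fun f g => AddMonoidHom.ext fun b => by
    show piAB s (h2dvd s hs) (f (g (liftBA s b)))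
      = piAB s (h2dvd s hs) (f (liftBA s (piAB s (h2dvd s hs) (g (liftBA s b)))))
    rw [key s hs]

section ringarg

lemma ring_cube_triv {R : Type*} [Ring R] (δ : R) (s t : ℕ) (hs : 1 ≤ s)
    (hδs : δ^s = 0) (hm3 : (3:R) * (t • (1:R)) = 1)
    (h0 : 3*δ + (3*δ^2 + δ^3) = 0) : δ = 0 := by
  set m : R := t • (1:R) with hmdef
  have hmc : ∀ x : R, m * x = x * m := by
    intro x
    rw [hmdef, smul_mul_assoc, one_mul, mul_smul_comm, mul_one]
  have hneg : 3*δ^2 + δ^3 = -(3*δ) := eq_neg_of_add_eq_zero_right h0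
  set r : R := -(m * ((3:R) + δ)) with hrdef
  have hδr : δ = δ^2 * r := by
    have c1 : δ^2 * r = -(m * (δ^2 * ((3:R) + δ))) := by
      rw [hrdef, mul_neg, ← mul_assoc, ← hmc (δ^2), mul_assoc]
    have c2 : δ^2 * ((3:R) + δ) = 3*δ^2 + δ^3 := by noncomm_ring
    rw [c1, c2, hneg, mul_neg, neg_neg, ← mul_assoc, hmc 3, hm3, one_mul]
  have hiter : ∀ k : ℕ, δ = δ^(k+1) * r^k := by
    intro k
    induction k with
    | zero => simp
    | succ k ih =>
      calc δ = δ^(k+1) * r^k := ih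
        _ = δ^k * (δ * r^k) := by rw [pow_succ, mul_assoc]
        _ = δ^k * ((δ^2 * r) * r^k) := by rw [← hδr]
        _ = δ^(k+1+1) * r^(k+1) := by
            rw [mul_assoc (δ^2), ← pow_succ' r, ← mul_assoc, ← pow_add]
  have := hiter s
  rwa [pow_succ', hδs, mul_zero, zero_mul] at this

variable (s : ℕ)

lemma pow_smul_A (hs : 1 ≤ s) (a : AA s) : 2^s • a = 0 := by
  obtain ⟨x, y, z⟩ := a
  have h1 : ∀ (m : ℕ) (w : ZMod m), m ∣ 2^s → 2^s • w = 0 := by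
    intro m w hm
    rw [nsmul_eq_mul, show ((2^s : ℕ) : ZMod m) = 0 from
      (ZMod.natCast_eq_zero_iff _ _).mpr hm, zero_mul]
  have e1 := h1 (2^s) x dvd_rfl
  have e2 := h1 2 y (h2dvd s hs)
  have e3 := h1 2 z (h2dvd s hs)
  simp [Prod.ext_iff, e1, e2, e3]

lemma main_triv (hs : 1 ≤ s) (F : AddMonoid.End (AA s)) (hF3 : F^3 = 1)
    (hFπ : ∀ a, piAB s (h2dvd s hs) (F a) = piAB s (h2dvd s hs) a) : F = 1 := by
  have hF : F = 1 + (F - 1) := by abel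
  set δ : AddMonoid.End (AA s) := F - 1 with hδdef
  -- δ maps into 2A
  have hδa : ∀ a, ∃ c, δ a = 2 • c := by
    intro a
    apply ker_pi s hs
    have h : δ a = F a - a := by
      rw [hδdef]; rfl
    rw [h, map_sub, hFπ, sub_self]
  -- nilpotence
  have hpow : ∀ (k : ℕ) (a : AA s), ∃ c, (δ^k) a = 2^k • c := by
    intro k
    induction k with
    | zero => intro a; exact ⟨a, by simp⟩
    | succ k ih =>
      intro a
      obtain ⟨c, hc⟩ := hδa a
      obtain ⟨c', hc'⟩ := ih c
      refine ⟨c', ?_⟩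
      have h : (δ^(k+1)) a = (δ^k) (δ a) := by rw [pow_succ]; rfl
      rw [h, hc, map_nsmul, hc', ← mul_nsmul', ← pow_succ']
  have hδs : δ^s = 0 := by
    refine AddMonoidHom.ext fun a => ?_
    show (δ^s) a = (0 : AddMonoid.End (AA s)) a
    obtain ⟨c, hc⟩ := hpow s a
    rw [hc, pow_smul_A s hs]
    rfl
  -- invert 3
  obtain ⟨t, ht⟩ : ∃ t, 3 * t % 2^s = 1 := Exists.imp (fun _ h => h.2) <|
    Nat.exists_mul_mod_eq_one_of_coprime
      (Nat.Coprime.pow_right s (by decide : Nat.Coprime 3 2))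
      (by have : 2^1 ≤ 2^s := Nat.pow_le_pow_right (by norm_num) hs; omega)
  have h3t : ∀ a : AA s, (3 * t) • a = a := by
    intro a
    have hd := Nat.div_add_mod (3*t) (2^s)
    rw [ht] at hd
    rw [← hd, add_nsmul, one_nsmul, mul_comm, mul_nsmul, pow_smul_A s hs, zero_add]
  have hm3 : (3 : AddMonoid.End (AA s)) * (t • (1 : AddMonoid.End (AA s))) = 1 := by
    refine AddMonoidHom.ext fun a => ?_
    show (3 : AddMonoid.End (AA s)) ((t • (1 : AddMonoid.End (AA s))) a) = a
    have h1 : (t • (1 : AddMonoid.End (AA s))) a = t • a := rfl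
    rw [h1, AddMonoid.End.ofNat_apply, ← mul_nsmul', h3t]
  -- cubic relation
  have e1 : (1 + δ)^3 = 1 + δ * ((3:AddMonoid.End (AA s)) + 3*δ + δ^2) := by noncomm_ring
  have hz : δ * ((3:AddMonoid.End (AA s)) + 3*δ + δ^2) = 0 := by
    have h := hF3
    rw [hF, e1] at h
    exact add_eq_left.mp h
  have h0 : 3*δ + (3*δ^2 + δ^3) = 0 := by
    rw [← hz]; noncomm_ring
  have := ring_cube_triv δ s t hs hδs hm3 h0
  rw [hF, this, add_zero]
end ringarg

section theta
variable (s : ℕ) (hs : 1 ≤ s)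

lemma aut_one_coe : ((1 : AddAut (AA s)) : AA s →+ AA s) = (1 : AddMonoid.End (AA s)) := rfl

lemma psi_autmul (f g : AddAut (AA s)) :
    Psi s hs ((f * g : AddAut (AA s)) : AA s →+ AA s)
      = Psi s hs (f : AA s →+ AA s) * Psi s hs (g : AA s →+ AA s) := by
  have h := (Psi s hs).map_mul ((f : AA s →+ AA s) : AddMonoid.End (AA s))
    ((g : AA s →+ AA s) : AddMonoid.End (AA s))
  exact h

def Theta : AddAut (AA s) →* AddAut BB :=
  MonoidHom.mk' (fun f =>
    { toFun := Psi s hs (f : AA s →+ AA s)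
      invFun := Psi s hs ((f⁻¹ : AddAut (AA s)) : AA s →+ AA s)
      left_inv := fun b => by
        have h := psi_autmul s hs f⁻¹ f
        rw [inv_mul_cancel, aut_one_coe s, map_one] at h
        have h2 := congrArg (fun (e : AddMonoid.End BB) => e b) h.symm
        simpa using h2
      right_inv := fun b => by
        have h := psi_autmul s hs f f⁻¹
        rw [mul_inv_cancel, aut_one_coe s, map_one] at h
        have h2 := congrArg (fun (e : AddMonoid.End BB) => e b) h.symm
        simpa using h2
      map_add' := (Psi s hs (f : AA s →+ AA s)).map_add })
    (fun f g => by
      refine AddEquiv.ext fun b => ?_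
      show Psi s hs ((f * g : AddAut (AA s)) : AA s →+ AA s) b
        = Psi s hs (f : AA s →+ AA s) (Psi s hs (g : AA s →+ AA s) b)
      rw [psi_autmul s hs f g]
      rfl)
end theta

section kernel
variable (s : ℕ) (hs : 1 ≤ s)

def autCoeEnd : AddAut (AA s) →* AddMonoid.End (AA s) where
  toFun := fun f => (f : AA s →+ AA s)
  map_one' := rfl
  map_mul' := fun f g => rfl

instance : Finite (AddAut (AA s)) := by
  haveI : NeZero (2^s) := ⟨pow_ne_zero _ two_ne_zero⟩
  exact Finite.of_injective (fun (f : AddAut (AA s)) => (f : AA s → AA s))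
    DFunLike.coe_injective

lemma ker_not_three : ¬ 3 ∣ Nat.card (Theta s hs).ker := by
  intro h3
  haveI : Fact (Nat.Prime 3) := ⟨by norm_num⟩
  obtain ⟨g, hg⟩ := exists_prime_orderOf_dvd_card' 3 h3
  set f := (g : AddAut (AA s)) with hfdef
  have hg3 : g ^ 3 = 1 := by rw [← hg]; exact pow_orderOf_eq_one g
  have hf3 : f ^ 3 = 1 := by simpa using congrArg Subtype.val hg3
  have hker : Theta s hs f = 1 := MonoidHom.mem_ker.mp g.2
  have hfix : ∀ b, Psi s hs (f : AA s →+ AA s) b = b := fun b => by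
    have := congrArg (fun (e : AddAut BB) => e b) hker
    exact (by simpa using this : (Theta s hs f) b = b)
  have hFπ : ∀ a, piAB s (h2dvd s hs) ((f : AA s →+ AA s) a)
      = piAB s (h2dvd s hs) a := by
    intro a
    have hk := key s hs (f : AA s →+ AA s) a
    refine Eq.trans (Eq.symm hk) ?_
    exact hfix (piAB s (h2dvd s hs) a)
  have hF3 : (autCoeEnd s f) ^ 3 = 1 := by rw [← map_pow, hf3, map_one]
  have hF1 : autCoeEnd s f = 1 := main_triv s hs _ hF3 hFπ
  have hfone : f = 1 := by
    refine AddEquiv.ext fun a => ?_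
    exact congrArg (fun (e : AddMonoid.End (AA s)) => e a) hF1
  have : g = 1 := Subtype.ext hfone
  rw [this, orderOf_one] at hg
  norm_num at hg
end kernel

section cardBB

def eBV : BB ≃+ (Fin 3 → ZMod 2) where
  toFun b := ![b.1, b.2.1, b.2.2]
  invFun v := (v 0, v 1, v 2)
  left_inv b := rfl
  right_inv v := by funext i; fin_cases i <;> rfl
  map_add' b c := by funext i; fin_cases i <;> rfl

def e3 : (AddAut (Fin 3 → ZMod 2)) ≃
    ((Fin 3 → ZMod 2) ≃ₗ[ZMod 2] (Fin 3 → ZMod 2)) where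
  toFun f := { f.toAddMonoidHom.toZModLinearMap 2 with
    invFun := f.symm, left_inv := f.left_inv, right_inv := f.right_inv }
  invFun g := g.toAddEquiv
  left_inv f := by ext a; rfl
  right_inv g := by ext a; rfl

lemma card_addaut_BB : Nat.card (AddAut BB) = 168 := by
  calc Nat.card (AddAut BB)
      = Nat.card (AddAut (Fin 3 → ZMod 2)) := Nat.card_congr (AddAut.congr eBV).toEquiv
    _ = Nat.card ((Fin 3 → ZMod 2) ≃ₗ[ZMod 2] (Fin 3 → ZMod 2)) := Nat.card_congr e3
    _ = Nat.card (LinearMap.GeneralLinearGroup (ZMod 2) (Fin 3 → ZMod 2)) :=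
        (Nat.card_congr (LinearMap.GeneralLinearGroup.generalLinearEquiv (ZMod 2)
          (Fin 3 → ZMod 2)).toEquiv).symm
    _ = Nat.card (GL (Fin 3) (ZMod 2)) :=
        (Nat.card_congr (Matrix.GeneralLinearGroup.toLin (n := Fin 3) (R := ZMod 2)).toEquiv).symm
    _ = 168 := by
        rw [Matrix.card_GL_field]
        simp [Fin.prod_univ_three]

end cardBB

section sigma
variable (s : ℕ)

def sigma3 : AddAut (AA s) :=
  { toFun := fun p => (p.1, p.2.2, p.2.1 + p.2.2)
    invFun := fun p => (p.1, p.2.1 + p.2.2, p.2.1)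
    left_inv := fun p => by
      obtain ⟨x, y, z⟩ := p
      have h : ∀ y z : ZMod 2, z + (y + z) = y := by decide
      simp [Prod.ext_iff, h]
    right_inv := fun p => by
      obtain ⟨x, y, z⟩ := p
      have h : ∀ y z : ZMod 2, y + z + y = z := by decide
      simp [Prod.ext_iff, h]
    map_add' := fun p q => by
      obtain ⟨x, y, z⟩ := p
      obtain ⟨x', y', z'⟩ := q
      simp [Prod.ext_iff]
      abel }

lemma sigma3_order : orderOf (sigma3 s) = 3 := by
  haveI : Fact (Nat.Prime 3) := ⟨by norm_num⟩
  refine orderOf_eq_prime ?_ ?_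
  · refine AddEquiv.ext fun p => ?_
    obtain ⟨x, y, z⟩ := p
    rw [pow_succ, pow_two, addAutOld_mul_apply, addAutOld_mul_apply]
    show (x, z + (y+z), (y + z) + (z + (y+z))) = (x, y, z)
    have h : ∀ y z : ZMod 2, z + (y+z) = y ∧ (y + z) + (z + (y+z)) = z := by decide
    rw [(h y z).2, (h y z).1]
  · intro h
    have h2 := congrArg (fun (e : AddAut (AA s)) => (e (0, 1, 0)).2.1) h
    simp [sigma3] at h2

lemma three_dvd_card : 3 ∣ Nat.card (AddAut (AA s)) := by
  rw [← sigma3_order s]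
  exact orderOf_dvd_natCard _
end sigma

section final
variable (s : ℕ)

lemma nine_not_dvd (hs : 1 ≤ s) : ¬ 9 ∣ Nat.card (AddAut (AA s)) := by
  intro h9
  have hcard : Nat.card (AddAut (AA s))
      = Nat.card (AddAut (AA s) ⧸ (Theta s hs).ker) * Nat.card (Theta s hs).ker :=
    Subgroup.card_eq_card_quotient_mul_card_subgroup _
  have hq : Nat.card (AddAut (AA s) ⧸ (Theta s hs).ker) = Nat.card (Theta s hs).range :=
    Nat.card_congr (QuotientGroup.quotientKerEquivRange (Theta s hs)).toEquiv
  rw [hcard, hq] at h9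
  have hco3 : Nat.Coprime 3 (Nat.card (Theta s hs).ker) :=
    (Nat.Prime.coprime_iff_not_dvd (by norm_num)).mpr (ker_not_three s hs)
  have hco9 : Nat.Coprime 9 (Nat.card (Theta s hs).ker) := by
    have := Nat.Coprime.pow_left 2 hco3
    norm_num at this ⊢
    exact this
  have h9r : 9 ∣ Nat.card (Theta s hs).range := hco9.dvd_of_dvd_mul_right h9
  have hrd : Nat.card (Theta s hs).range ∣ Nat.card (AddAut BB) :=
    Subgroup.card_subgroup_dvd_card _
  rw [card_addaut_BB] at hrd
  have : (9 : ℕ) ∣ 168 := h9r.trans hrd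
  norm_num at this

def mequiv : (Multiplicative (ZMod (2 ^ s)) × Multiplicative (ZMod 2) ×
    Multiplicative (ZMod 2)) ≃* Multiplicative (AA s) where
  toFun p := Multiplicative.ofAdd (p.1.toAdd, p.2.1.toAdd, p.2.2.toAdd)
  invFun q := (Multiplicative.ofAdd q.toAdd.1, Multiplicative.ofAdd q.toAdd.2.1,
    Multiplicative.ofAdd q.toAdd.2.2)
  left_inv _ := rfl
  right_inv _ := rfl
  map_mul' _ _ := rfl

lemma card_glue : Nat.card (MulAut (Multiplicative (ZMod (2 ^ s)) × Multiplicative (ZMod 2) ×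
    Multiplicative (ZMod 2))) = Nat.card (AddAut (AA s)) := by
  calc Nat.card (MulAut (Multiplicative (ZMod (2 ^ s)) × Multiplicative (ZMod 2) ×
      Multiplicative (ZMod 2)))
      = Nat.card (MulAut (Multiplicative (AA s))) :=
        Nat.card_congr (MulAut.congr (mequiv s)).toEquiv
    _ = Nat.card (AddAut (AA s)) := (Nat.card_congr AddEquiv.toMultiplicative).symm
end final

theorem stmt10 (s : ℕ) (hs : 1 ≤ s) :
    3 ∣ Nat.card (MulAut (Multiplicative (ZMod (2 ^ s)) × Multiplicative (ZMod 2) ×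
      Multiplicative (ZMod 2))) ∧
    ¬ 9 ∣ Nat.card (MulAut (Multiplicative (ZMod (2 ^ s)) × Multiplicative (ZMod 2) ×
      Multiplicative (ZMod 2))) := by
  rw [card_glue s]
  exact ⟨three_dvd_card s, nine_not_dvd s hs⟩
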